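/- Let μ be a finite complex Borel measure on [0, ∞) with μ([0,∞)) ≠ 0, whose Laplace transform L(s) = ∫ e^{−sx} dμ(x) satisfies μ([0,∞))·∫ e^{−(s+t)x} dμ(x) = L(s)·L(t) for all s, t ≥ 0. Then μ = c·δ_a for some nonzero c ∈ ℂ and some a ∈ [0, ∞). -/

import Mathlib

open MeasureTheory Complex
open scoped Classical
open scoped ENNReal NNReal BoundedContinuousFunction

lemma bdd_integrable (P : Measure ℝ) [IsFiniteMeasure P] {E : Type*} [NormedAddCommGroup E]
    (g : ℝ → E) (hmg : AEStronglyMeasurable g P) (C : ℝ) (hC : ∀ᵐ x ∂P, ‖g x‖ ≤ C) :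
    Integrable g P :=
  ⟨hmg, HasFiniteIntegral.of_bounded hC⟩

lemma key_real (P : Measure ℝ) [IsFiniteMeasure P] (v : ℝ → ℝ) (hv : Measurable v)
    (hbd : ∀ x, |v x| ≤ 1) (γ b : ℝ)
    (H : ∀ f : ℝ → ℝ, Continuous f → ∫ x, f (Real.exp (-x)) * v x ∂P = γ * f b) :
    ∀ S : Set ℝ, MeasurableSet S →
      ∫ x in S, v x ∂P = if b ∈ (fun x => Real.exp (-x)) '' S then γ else 0 := by
  set T : ℝ → ℝ := fun x => Real.exp (-x) with hTdef
  have hTcont : Continuous T := Real.continuous_exp.comp continuous_neg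
  have hTinj : Function.Injective T := fun x y hxy => by
    have := Real.exp_injective hxy
    linarith [neg_injective this]
  have hTemb : MeasurableEmbedding T := hTcont.measurableEmbedding hTinj
  set dp : ℝ → ℝ≥0 := fun x => (v x).toNNReal with hdp
  set dm : ℝ → ℝ≥0 := fun x => (-(v x)).toNNReal with hdm
  have hdpm : Measurable dp := hv.real_toNNReal
  have hdmm : Measurable dm := hv.neg.real_toNNReal
  have hdple : ∀ x, (dp x : ℝ) ≤ 1 := by
    intro x
    simp only [hdp, Real.coe_toNNReal']
    have := abs_le.mp (hbd x); exact max_le (by linarith) (by linarith)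
  have hdmle : ∀ x, (dm x : ℝ) ≤ 1 := by
    intro x
    simp only [hdm, Real.coe_toNNReal']
    have := abs_le.mp (hbd x); exact max_le (by linarith) (by linarith)
  set Pp : Measure ℝ := P.withDensity (fun x => (dp x : ℝ≥0∞)) with hPp
  set Pm : Measure ℝ := P.withDensity (fun x => (dm x : ℝ≥0∞)) with hPm
  set μ₁ : Measure ℝ := Pp.map T + (ENNReal.ofReal (-γ)) • Measure.dirac b with hμ₁
  set μ₂ : Measure ℝ := Pm.map T + (ENNReal.ofReal γ) • Measure.dirac b with hμ₂
  -- step 1 : test against nonneg bounded continuous functions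
  have step1 : ∀ f : ℝ →ᵇ ℝ≥0, ∫⁻ x, f x ∂μ₁ = ∫⁻ x, f x ∂μ₂ := by
    intro f
    obtain ⟨Cf, hCf⟩ : ∃ C : ℝ, ∀ u : ℝ, (f u : ℝ) ≤ C :=
      ⟨(nndist f 0 : ℝ), fun u => by exact_mod_cast BoundedContinuousFunction.NNReal.upper_bound f u⟩
    have hCf0 : (0:ℝ) ≤ Cf := le_trans (f 0).coe_nonneg (hCf 0)
    have hfm : Measurable fun u => (f u : ℝ≥0∞) := by
      exact (ENNReal.continuous_coe.comp f.continuous).measurable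
    have hfrm : Measurable fun u => (f u : ℝ) :=
      (NNReal.continuous_coe.comp f.continuous).measurable
    -- compute ∫⁻ f over mapped-withDensity pieces
    have key : ∀ d : ℝ → ℝ≥0, Measurable d → (∀ x, (d x : ℝ) ≤ 1) →
        ∫⁻ u, f u ∂((P.withDensity (fun x => (d x : ℝ≥0∞))).map T)
          = ENNReal.ofReal (∫ x, (d x : ℝ) * (f (T x) : ℝ) ∂P) := by
      intro d hd hdle
      rw [lintegral_map hfm hTcont.measurable]
      rw [lintegral_withDensity_eq_lintegral_mul _ (by exact_mod_cast hd.coe_nnreal_ennreal) _]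
      · have : ∀ x, ((d x : ℝ≥0∞) * (f (T x) : ℝ≥0∞)) = ((d x * f (T x) : ℝ≥0) : ℝ≥0∞) := by
          intro x; push_cast; ring
        calc ∫⁻ x, ((fun x => (d x : ℝ≥0∞)) * fun u => (f (T u) : ℝ≥0∞)) x ∂P
            = ∫⁻ x, ((d x * f (T x) : ℝ≥0) : ℝ≥0∞) ∂P := by
              refine lintegral_congr fun x => ?_
              simp only [Pi.mul_apply]; exact this x
          _ = ENNReal.ofReal (∫ x, ((d x * f (T x) : ℝ≥0) : ℝ) ∂P) := by
              rw [lintegral_coe_eq_integral]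
              refine bdd_integrable P _ ?_ Cf (Filter.Eventually.of_forall fun x => ?_)
              · exact ((hd.coe_nnreal_real).mul ((hfrm.comp hTcont.measurable))).aestronglyMeasurable
              · simp only [NNReal.coe_mul, Real.norm_eq_abs, _root_.abs_of_nonneg
                  (mul_nonneg (d x).coe_nonneg (f (T x)).coe_nonneg)]
                calc (d x : ℝ) * (f (T x) : ℝ) ≤ 1 * Cf := by
                      exact mul_le_mul (hdle x) (hCf _) (f (T x)).coe_nonneg one_pos.le
                  _ = Cf := one_mul Cf
          _ = ENNReal.ofReal (∫ x, (d x : ℝ) * (f (T x) : ℝ) ∂P) := by push_cast; rfl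
      · exact hfm.comp hTcont.measurable
    have hdirac : ∫⁻ u, (f u : ℝ≥0∞) ∂(Measure.dirac b) = ENNReal.ofReal (f b : ℝ) := by
      rw [lintegral_dirac' _ hfm]; simp [ENNReal.ofReal_coe_nnreal]
    have hintp : Integrable (fun x => (dp x : ℝ) * (f (T x) : ℝ)) P := by
      refine bdd_integrable P _ ?_ Cf (Filter.Eventually.of_forall fun x => ?_)
      · exact ((hdpm.coe_nnreal_real).mul (hfrm.comp hTcont.measurable)).aestronglyMeasurable
      · simp only [Real.norm_eq_abs,
          _root_.abs_of_nonneg (mul_nonneg (dp x).coe_nonneg (f (T x)).coe_nonneg)]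
        calc (dp x : ℝ) * (f (T x) : ℝ) ≤ 1 * Cf :=
              mul_le_mul (hdple x) (hCf _) (f (T x)).coe_nonneg one_pos.le
          _ = Cf := one_mul Cf
    have hintm : Integrable (fun x => (dm x : ℝ) * (f (T x) : ℝ)) P := by
      refine bdd_integrable P _ ?_ Cf (Filter.Eventually.of_forall fun x => ?_)
      · exact ((hdmm.coe_nnreal_real).mul (hfrm.comp hTcont.measurable)).aestronglyMeasurable
      · simp only [Real.norm_eq_abs,
          _root_.abs_of_nonneg (mul_nonneg (dm x).coe_nonneg (f (T x)).coe_nonneg)]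
        calc (dm x : ℝ) * (f (T x) : ℝ) ≤ 1 * Cf :=
              mul_le_mul (hdmle x) (hCf _) (f (T x)).coe_nonneg one_pos.le
          _ = Cf := one_mul Cf
    have hsub : ∫ x, (dp x : ℝ) * (f (T x) : ℝ) ∂P - ∫ x, (dm x : ℝ) * (f (T x) : ℝ) ∂P
        = γ * (f b : ℝ) := by
      rw [← integral_sub hintp hintm]
      have : ∀ x, (dp x : ℝ) * (f (T x) : ℝ) - (dm x : ℝ) * (f (T x) : ℝ)
          = (f (T x) : ℝ) * v x := by
        intro x
        simp only [hdp, hdm, Real.coe_toNNReal']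
        rcases le_total (v x) 0 with hv0 | hv0
        · rw [max_eq_right hv0, max_eq_left (by linarith)]; ring
        · rw [max_eq_left hv0, max_eq_right (by linarith)]; ring
      simp_rw [this]
      exact H _ (NNReal.continuous_coe.comp f.continuous)
    -- put together
    have hAp0 : 0 ≤ ∫ x, (dp x : ℝ) * (f (T x) : ℝ) ∂P :=
      integral_nonneg fun x => mul_nonneg (dp x).coe_nonneg (f (T x)).coe_nonneg
    have hAm0 : 0 ≤ ∫ x, (dm x : ℝ) * (f (T x) : ℝ) ∂P :=
      integral_nonneg fun x => mul_nonneg (dm x).coe_nonneg (f (T x)).coe_nonneg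
    rw [hμ₁, hμ₂]
    rw [lintegral_add_measure, lintegral_add_measure, lintegral_smul_measure,
      lintegral_smul_measure, key dp hdpm hdple, key dm hdmm hdmle, hdirac]
    have hmax : max γ 0 - max (-γ) 0 = γ := by
      rcases le_total γ 0 with h0 | h0
      · rw [max_eq_right h0, max_eq_left (by linarith)]; ring
      · rw [max_eq_left h0, max_eq_right (by linarith)]; ring
    have e1 : ENNReal.ofReal (-γ) = ENNReal.ofReal (max (-γ) 0) := by
      rcases le_total γ 0 with h0 | h0
      · rw [max_eq_left (by linarith)]
      · rw [max_eq_right (by linarith), ENNReal.ofReal_of_nonpos (by linarith),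
          ENNReal.ofReal_zero]
    have e2 : ENNReal.ofReal γ = ENNReal.ofReal (max γ 0) := by
      rcases le_total γ 0 with h0 | h0
      · rw [max_eq_right h0, ENNReal.ofReal_of_nonpos h0, ENNReal.ofReal_zero]
      · rw [max_eq_left h0]
    rw [e1, e2, smul_eq_mul, smul_eq_mul, ← ENNReal.ofReal_mul' (f b).coe_nonneg, ← ENNReal.ofReal_mul' (f b).coe_nonneg,
      ← ENNReal.ofReal_add hAp0 (by positivity), ← ENNReal.ofReal_add hAm0 (by positivity)]
    congr 1
    linear_combination hsub - (f b : ℝ) * hmax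
  -- finiteness
  have hPpfin : IsFiniteMeasure Pp := by
    constructor
    rw [hPp, withDensity_apply _ MeasurableSet.univ, Measure.restrict_univ]
    have hle : ∫⁻ x, (dp x : ℝ≥0∞) ∂P ≤ ∫⁻ _, (1:ℝ≥0∞) ∂P := by
      refine lintegral_mono fun x => ?_
      exact ENNReal.coe_le_one_iff.mpr (by exact_mod_cast hdple x)
    refine lt_of_le_of_lt hle ?_
    simp [measure_lt_top]
  have hPmfin : IsFiniteMeasure Pm := by
    constructor
    rw [hPm, withDensity_apply _ MeasurableSet.univ, Measure.restrict_univ]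
    have hle : ∫⁻ x, (dm x : ℝ≥0∞) ∂P ≤ ∫⁻ _, (1:ℝ≥0∞) ∂P := by
      refine lintegral_mono fun x => ?_
      exact ENNReal.coe_le_one_iff.mpr (by exact_mod_cast hdmle x)
    refine lt_of_le_of_lt hle ?_
    simp [measure_lt_top]
  have hμ₁fin : IsFiniteMeasure μ₁ := by
    constructor
    rw [hμ₁]
    simp only [Measure.add_apply, Measure.smul_apply, smul_eq_mul]
    have h1 : (Pp.map T) Set.univ < ⊤ := by
      rw [Measure.map_apply hTcont.measurable MeasurableSet.univ]
      exact (measure_mono (Set.subset_univ _)).trans_lt (measure_lt_top _ _)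
    have h2 : ENNReal.ofReal (-γ) * Measure.dirac b Set.univ < ⊤ :=
      ENNReal.mul_lt_top ENNReal.ofReal_lt_top (by simp)
    exact ENNReal.add_lt_top.mpr ⟨h1, h2⟩
  have hμ₂fin : IsFiniteMeasure μ₂ := by
    constructor
    rw [hμ₂]
    simp only [Measure.add_apply, Measure.smul_apply, smul_eq_mul]
    have h1 : (Pm.map T) Set.univ < ⊤ := by
      rw [Measure.map_apply hTcont.measurable MeasurableSet.univ]
      exact (measure_mono (Set.subset_univ _)).trans_lt (measure_lt_top _ _)
    have h2 : ENNReal.ofReal γ * Measure.dirac b Set.univ < ⊤ :=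
      ENNReal.mul_lt_top ENNReal.ofReal_lt_top (by simp)
    exact ENNReal.add_lt_top.mpr ⟨h1, h2⟩
  have hext : μ₁ = μ₂ := @ext_of_forall_lintegral_eq_of_IsFiniteMeasure ℝ _ _ _ _ μ₁ μ₂ hμ₁fin step1
  -- step 3 : evaluate on sets
  intro S hS
  have hA : MeasurableSet (T '' S) := hTemb.measurableSet_image.mpr hS
  have hpm : ∀ x, (dp x : ℝ) - (dm x : ℝ) = v x := by
    intro x
    simp only [hdp, hdm, Real.coe_toNNReal']
    rcases le_total (v x) 0 with hv0 | hv0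
    · rw [max_eq_right hv0, max_eq_left (by linarith)]; ring
    · rw [max_eq_left hv0, max_eq_right (by linarith)]; ring
  have intSp : Integrable (fun x => (dp x : ℝ)) (P.restrict S) := by
    refine bdd_integrable _ _ hdpm.coe_nnreal_real.aestronglyMeasurable 1
      (Filter.Eventually.of_forall fun x => ?_)
    rw [Real.norm_eq_abs, _root_.abs_of_nonneg (dp x).coe_nonneg]; exact hdple x
  have intSm : Integrable (fun x => (dm x : ℝ)) (P.restrict S) := by
    refine bdd_integrable _ _ hdmm.coe_nnreal_real.aestronglyMeasurable 1
      (Filter.Eventually.of_forall fun x => ?_)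
    rw [Real.norm_eq_abs, _root_.abs_of_nonneg (dm x).coe_nonneg]; exact hdmle x
  have hIp0 : 0 ≤ ∫ x in S, (dp x : ℝ) ∂P := integral_nonneg fun x => (dp x).coe_nonneg
  have hIm0 : 0 ≤ ∫ x in S, (dm x : ℝ) ∂P := integral_nonneg fun x => (dm x).coe_nonneg
  have hsplit : ∫ x in S, v x ∂P = (∫ x in S, (dp x : ℝ) ∂P) - ∫ x in S, (dm x : ℝ) ∂P := by
    rw [← integral_sub intSp intSm]
    exact integral_congr_ae (Filter.Eventually.of_forall fun x => (hpm x).symm)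
  have cvt : ∀ (d : ℝ → ℝ≥0), Measurable d →
      Integrable (fun x => (d x : ℝ)) (P.restrict S) →
      ∫⁻ x in S, (d x : ℝ≥0∞) ∂P = ENNReal.ofReal (∫ x in S, (d x : ℝ) ∂P) := by
    intro d hd hint
    calc ∫⁻ x in S, (d x : ℝ≥0∞) ∂P = ∫⁻ x in S, ENNReal.ofReal ((d x : ℝ)) ∂P := by
          simp [ENNReal.ofReal_coe_nnreal]
      _ = ENNReal.ofReal (∫ x in S, (d x : ℝ) ∂P) :=
          (ofReal_integral_eq_lintegral_ofReal hint
            (Filter.Eventually.of_forall fun x => (d x).coe_nonneg)).symm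
  have heval := congrArg (fun μ : Measure ℝ => μ (T '' S)) hext
  simp only [hμ₁, hμ₂, Measure.add_apply, Measure.smul_apply, smul_eq_mul] at heval
  rw [Measure.map_apply hTcont.measurable hA, Measure.map_apply hTcont.measurable hA,
    hTinj.preimage_image, hPp, hPm, withDensity_apply _ hS, withDensity_apply _ hS,
    Measure.dirac_apply' _ hA, cvt dp hdpm intSp, cvt dm hdmm intSm] at heval
  by_cases hb : b ∈ T '' S
  · simp only [Set.indicator_of_mem hb, Pi.one_apply, mul_one] at heval
    have := congrArg ENNReal.toReal heval
    rw [ENNReal.toReal_add (by simp) (by simp), ENNReal.toReal_add (by simp) (by simp),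
      ENNReal.toReal_ofReal hIp0, ENNReal.toReal_ofReal hIm0,
      ENNReal.toReal_ofReal', ENNReal.toReal_ofReal'] at this
    have hmax : max γ 0 - max (-γ) 0 = γ := by
      rcases le_total γ 0 with h0 | h0
      · rw [max_eq_right h0, max_eq_left (by linarith)]; ring
      · rw [max_eq_left h0, max_eq_right (by linarith)]; ring
    rw [if_pos hb, hsplit]
    linarith
  · simp only [Set.indicator_of_notMem hb, mul_zero, add_zero] at heval
    have := congrArg ENNReal.toReal heval
    rw [ENNReal.toReal_ofReal hIp0, ENNReal.toReal_ofReal hIm0] at this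
    rw [if_neg hb, hsplit]
    linarith

/-- A finite complex measure `h • P` on `[0, ∞)` with nonzero mass whose
Laplace transform satisfies `μ([0,∞))·L(s+t) = L(s)·L(t)` for all `s, t ≥ 0`
is a nonzero multiple of a Dirac mass at some `a ∈ [0, ∞)`. -/
theorem stmt_7 (P : Measure ℝ) [IsFiniteMeasure P] (h : ℝ → ℂ)
    (hmeas : Measurable h) (hnorm : ∀ x, ‖h x‖ = 1)
    (hsupp : P (Set.Ici (0 : ℝ))ᶜ = 0)
    (hmass : ∫ x, h x ∂P ≠ 0)
    (hcov : ∀ s t : ℝ, 0 ≤ s → 0 ≤ t →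
      (∫ x, h x ∂P) * ∫ x, ((Real.exp (-(s + t) * x) : ℝ) : ℂ) * h x ∂P
        = (∫ x, ((Real.exp (-s * x) : ℝ) : ℂ) * h x ∂P) *
            ∫ x, ((Real.exp (-t * x) : ℝ) : ℂ) * h x ∂P) :
    ∃ (c : ℂ) (a : ℝ), c ≠ 0 ∧ 0 ≤ a ∧
      ∀ s : Set ℝ, MeasurableSet s →
        ∫ x in s, h x ∂P = if a ∈ s then c else 0 := by
  have hae0 : ∀ᵐ x ∂P, (0:ℝ) ≤ x := by
    have hset : {x : ℝ | ¬ (0:ℝ) ≤ x} = (Set.Ici (0:ℝ))ᶜ := by ext x; simp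
    rw [ae_iff, hset]
    exact hsupp
  -- integrability and bound helpers
  have Hint : ∀ (g : ℝ → ℂ), Measurable g → ∀ C : ℝ, (∀ x, 0 ≤ x → ‖g x‖ ≤ C) →
      Integrable (fun x => g x * h x) P := by
    intro g hg C hC
    refine bdd_integrable P _ (hg.mul hmeas).aestronglyMeasurable C ?_
    filter_upwards [hae0] with x hx
    rw [norm_mul, hnorm, mul_one]; exact hC x hx
  have Hbnd : ∀ (g : ℝ → ℂ), ∀ C : ℝ, (∀ x, 0 ≤ x → ‖g x‖ ≤ C) →
      ‖∫ x, g x * h x ∂P‖ ≤ C * (P Set.univ).toReal := by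
    intro g C hC
    refine norm_integral_le_of_norm_le_const ?_
    filter_upwards [hae0] with x hx
    rw [norm_mul, hnorm, mul_one]; exact hC x hx
  set c : ℂ := ∫ x, h x ∂P with hc
  set L : ℝ → ℂ := fun s => ∫ x, ((Real.exp (-s * x) : ℝ) : ℂ) * h x ∂P with hLdef
  have hL0 : L 0 = c := by
    have : ∀ x : ℝ, ((Real.exp (-0 * x) : ℝ) : ℂ) = 1 := by intro x; norm_num
    rw [hLdef, hc]
    simp only [this, one_mul]
  set β : ℂ := L 1 / c with hβ
  have hL1 : L 1 = c * β := by rw [hβ, mul_div_assoc', eq_div_iff hmass, mul_comm]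
  have hLn : ∀ n : ℕ, L n = c * β ^ n := by
    intro n
    induction n with
    | zero => simpa using hL0
    | succ n ih =>
      have hcast : ((n+1 : ℕ) : ℝ) = (n : ℝ) + 1 := by push_cast; ring
      have hc1 := hcov (n : ℝ) 1 (Nat.cast_nonneg n) zero_le_one
      have hc1' : c * L ((n:ℝ) + 1) = L n * L 1 := hc1
      rw [hL1, ih] at hc1'
      have : c * L ((n+1:ℕ):ℝ) = c * (c * β ^ (n+1)) := by
        rw [hcast, hc1']; ring
      rw [mul_left_cancel₀ hmass this]
  have Mn : ∀ n : ℕ, ∫ x, (((Real.exp (-x) : ℝ)) : ℂ) ^ n * h x ∂P = c * β ^ n := by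
    intro n
    rw [← hLn n, hLdef]
    refine integral_congr_ae (Filter.Eventually.of_forall fun x => ?_)
    have : Real.exp (-(n:ℝ) * x) = (Real.exp (-x)) ^ n := by
      rw [← Real.exp_nat_mul]; ring_nf
    show ((Real.exp (-x) : ℝ) : ℂ) ^ n * h x = ((Real.exp (-(n:ℝ) * x) : ℝ) : ℂ) * h x
    rw [this]
    push_cast
    ring
  have hu : ∀ x : ℝ, 0 ≤ x → 0 < Real.exp (-x) ∧ Real.exp (-x) ≤ 1 := by
    intro x hx
    refine ⟨Real.exp_pos _, ?_⟩
    rw [show (1:ℝ) = Real.exp 0 from (Real.exp_zero).symm]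
    exact Real.exp_le_exp.mpr (by linarith)
  have hexpm : Measurable fun x : ℝ => ((Real.exp (-x) : ℝ) : ℂ) :=
    (Complex.continuous_ofReal.comp (Real.continuous_exp.comp continuous_neg)).measurable
  have polyid : ∀ p : Polynomial ℂ,
      ∫ x, Polynomial.eval ((Real.exp (-x) : ℝ) : ℂ) p * h x ∂P = c * Polynomial.eval β p := by
    intro p
    set N := p.natDegree + 1 with hN
    have hintpow : ∀ i : ℕ, Integrable (fun x => ((Real.exp (-x) : ℝ) : ℂ) ^ i * h x) P := by
      intro i
      refine Hint _ (hexpm.pow_const i) 1 fun x hx => ?_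
      rw [norm_pow]
      refine pow_le_one₀ (norm_nonneg _) ?_
      rw [Complex.norm_real, Real.norm_eq_abs, abs_of_pos (hu x hx).1]
      exact (hu x hx).2
    calc ∫ x, Polynomial.eval ((Real.exp (-x) : ℝ) : ℂ) p * h x ∂P
        = ∫ x, ∑ i ∈ Finset.range N, p.coeff i * (((Real.exp (-x) : ℝ) : ℂ) ^ i * h x) ∂P := by
          refine integral_congr_ae (Filter.Eventually.of_forall fun x => ?_)
          show Polynomial.eval ((Real.exp (-x) : ℝ) : ℂ) p * h x = _
          rw [Polynomial.eval_eq_sum_range, Finset.sum_mul]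
          exact Finset.sum_congr rfl fun i _ => mul_assoc _ _ _
      _ = ∑ i ∈ Finset.range N, ∫ x, p.coeff i * (((Real.exp (-x) : ℝ) : ℂ) ^ i * h x) ∂P :=
          integral_finset_sum _ (fun i _ => (hintpow i).const_mul _)
      _ = ∑ i ∈ Finset.range N, p.coeff i * (c * β ^ i) := by
          refine Finset.sum_congr rfl fun i _ => ?_
          rw [integral_const_mul, Mn i]
      _ = c * ∑ i ∈ Finset.range N, p.coeff i * β ^ i := by
          rw [Finset.mul_sum]
          exact Finset.sum_congr rfl fun i _ => by ring
      _ = c * Polynomial.eval β p := by rw [← Polynomial.eval_eq_sum_range]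
  have hc0 : 0 < ‖c‖ := norm_pos_iff.mpr hmass
  set Pt : ℝ := (P Set.univ).toReal with hPt
  have hPt0 : 0 ≤ Pt := ENNReal.toReal_nonneg
  -- ‖β‖ ≤ 1
  have hβ1 : ‖β‖ ≤ 1 := by
    by_contra hb
    push_neg at hb
    obtain ⟨n, hn⟩ := pow_unbounded_of_one_lt (Pt / ‖c‖) hb
    have h1 : ‖∫ x, ((Real.exp (-x) : ℝ) : ℂ) ^ n * h x ∂P‖ ≤ 1 * Pt := by
      refine Hbnd _ 1 fun x hx => ?_
      rw [norm_pow]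
      refine pow_le_one₀ (norm_nonneg _) ?_
      rw [Complex.norm_real, Real.norm_eq_abs, abs_of_pos (hu x hx).1]
      exact (hu x hx).2
    rw [Mn n, norm_mul, norm_pow] at h1
    have h2 : Pt < ‖β‖ ^ n * ‖c‖ := (div_lt_iff₀ hc0).mp hn
    nlinarith
  -- im β = 0
  have him : β.im = 0 := by
    by_contra ht
    set r : ℝ := β.re with hr
    set t : ℝ := β.im with htd
    have htt : 0 < t ^ 2 := by positivity
    have hr1 : |r| ≤ 1 := le_trans (Complex.abs_re_le_norm β) hβ1
    have ht1 : t ^ 2 ≤ 1 := by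
      have : |t| ≤ 1 := le_trans (Complex.abs_im_le_norm β) hβ1
      nlinarith [abs_nonneg t, _root_.sq_abs t]
    have h5 : (0:ℝ) < 5 - t ^ 2 := by nlinarith
    set q : Polynomial ℂ :=
      Polynomial.C 5 - (Polynomial.X - Polynomial.C β) *
        (Polynomial.X - Polynomial.C ((starRingEnd ℂ) β)) with hq
    have hevβ : Polynomial.eval β q = 5 := by simp [hq]
    have hbase : ∀ x : ℝ, 0 ≤ x → ‖Polynomial.eval ((Real.exp (-x) : ℝ) : ℂ) q‖ ≤ 5 - t ^ 2 := by
      intro x hx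
      set u : ℝ := Real.exp (-x) with hud
      have hu0 := (hu x hx).1
      have hu1 := (hu x hx).2
      have hconj : (starRingEnd ℂ) ((u : ℂ) - β) = (u : ℂ) - (starRingEnd ℂ) β := by
        rw [map_sub, Complex.conj_ofReal]
      have hev : Polynomial.eval ((u : ℝ) : ℂ) q
          = ((5 - Complex.normSq ((u : ℂ) - β) : ℝ) : ℂ) := by
        simp only [hq, Polynomial.eval_sub, Polynomial.eval_mul, Polynomial.eval_C,
          Polynomial.eval_X]
        rw [← hconj, Complex.mul_conj]
        push_cast
        ring
      have hnq : Complex.normSq ((u : ℂ) - β) = (u - r) ^ 2 + t ^ 2 := by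
        rw [Complex.normSq_apply]
        simp [hr, htd]
        ring
      rw [hev, Complex.norm_real, Real.norm_eq_abs, hnq]
      have habs : |r| ≤ 1 := hr1
      rw [_root_.abs_of_nonneg (by nlinarith [abs_le.mp habs])]
      nlinarith [sq_nonneg (u - r)]
    have hlt : 1 < 5 / (5 - t ^ 2) := by
      rw [lt_div_iff₀ h5]; nlinarith
    obtain ⟨n, hn⟩ := pow_unbounded_of_one_lt (Pt / ‖c‖) hlt
    have hP : ‖∫ x, Polynomial.eval ((Real.exp (-x) : ℝ) : ℂ) (q ^ n) * h x ∂P‖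
        ≤ (5 - t ^ 2) ^ n * Pt := by
      refine Hbnd _ _ fun x hx => ?_
      rw [Polynomial.eval_pow, norm_pow]
      exact pow_le_pow_left₀ (norm_nonneg _) (hbase x hx) n
    rw [polyid (q ^ n), Polynomial.eval_pow, hevβ, norm_mul, norm_pow] at hP
    have h5n : ‖(5:ℂ)‖ = 5 := by
      rw [show ((5:ℂ)) = ((5:ℝ):ℂ) by norm_num, Complex.norm_real, Real.norm_eq_abs]
      norm_num
    rw [h5n] at hP
    rw [div_pow, div_lt_div_iff₀ hc0 (by positivity)] at hn
    nlinarith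
  -- re β ≥ 0
  have hrepos : 0 ≤ β.re := by
    by_contra hrneg
    push_neg at hrneg
    set r : ℝ := β.re with hr
    have hβr : β = ((r : ℝ) : ℂ) := Complex.ext rfl him
    set q : Polynomial ℂ := Polynomial.C 1 - Polynomial.X with hq
    have hevβ : Polynomial.eval β q = ((1 - r : ℝ) : ℂ) := by
      simp [hq, hβr]
    have h1r : 1 < 1 - r := by linarith
    obtain ⟨n, hn⟩ := pow_unbounded_of_one_lt (Pt / ‖c‖) h1r
    have hP : ‖∫ x, Polynomial.eval ((Real.exp (-x) : ℝ) : ℂ) (q ^ n) * h x ∂P‖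
        ≤ 1 * Pt := by
      refine Hbnd _ _ fun x hx => ?_
      rw [Polynomial.eval_pow, norm_pow]
      refine pow_le_one₀ (norm_nonneg _) ?_
      have : Polynomial.eval ((Real.exp (-x) : ℝ) : ℂ) q = ((1 - Real.exp (-x) : ℝ) : ℂ) := by
        simp [hq]
      rw [this, Complex.norm_real, Real.norm_eq_abs]
      rw [_root_.abs_of_nonneg (by linarith [(hu x hx).2])]
      linarith [(hu x hx).1]
    rw [polyid (q ^ n), Polynomial.eval_pow, hevβ, norm_mul, norm_pow, Complex.norm_real,
      Real.norm_eq_abs, _root_.abs_of_nonneg (by linarith : (0:ℝ) ≤ 1 - r)] at hP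
    have h2 : Pt < (1 - r) ^ n * ‖c‖ := (div_lt_iff₀ hc0).mp hn
    nlinarith
  -- β is a real number b ∈ [0,1]
  set b : ℝ := β.re with hbdef
  have hβb : β = ((b : ℝ) : ℂ) := Complex.ext rfl him
  have hb1 : b ≤ 1 := le_trans (le_abs_self b) (le_trans (Complex.abs_re_le_norm β) hβ1)
  have hb0 : 0 ≤ b := hrepos
  -- integrability of continuous test compositions
  have hintf : ∀ f : ℝ → ℝ, Continuous f →
      Integrable (fun x => ((f (Real.exp (-x)) : ℝ) : ℂ) * h x) P := by
    intro f hf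
    obtain ⟨Cf, hCf⟩ := IsCompact.exists_bound_of_continuousOn isCompact_Icc hf.continuousOn
    refine Hint _ ?_ Cf fun x hx => ?_
    · exact (Complex.continuous_ofReal.comp
        (hf.comp (Real.continuous_exp.comp continuous_neg))).measurable
    · rw [Complex.norm_real]
      exact hCf _ ⟨(hu x hx).1.le, (hu x hx).2⟩
  -- Stone-Weierstrass step
  have cont_id : ∀ f : ℝ → ℝ, Continuous f →
      ∫ x, ((f (Real.exp (-x)) : ℝ) : ℂ) * h x ∂P = c * ((f b : ℝ) : ℂ) := by
    intro f hf
    set D : ℂ := ∫ x, ((f (Real.exp (-x)) : ℝ) : ℂ) * h x ∂P - c * ((f b : ℝ) : ℂ) with hD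
    have hsmall : ∀ ε : ℝ, 0 < ε → ‖D‖ ≤ ε * (Pt + ‖c‖) := by
      intro ε hε
      obtain ⟨p, hp⟩ := exists_polynomial_near_of_continuousOn 0 1 f hf.continuousOn ε hε
      set pc : Polynomial ℂ := p.map Complex.ofRealHom with hpc
      have hevc : ∀ u : ℝ, Polynomial.eval ((u : ℝ) : ℂ) pc
          = ((Polynomial.eval u p : ℝ) : ℂ) := by
        intro u
        have h1 : Polynomial.eval₂ Complex.ofRealHom (Complex.ofRealHom u) p
            = Complex.ofRealHom (Polynomial.eval u p) := Polynomial.eval₂_hom _ _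
        rw [hpc, Polynomial.eval_map]
        simpa [Complex.ofRealHom_eq_coe] using h1
      have hpoly := polyid pc
      rw [hβb, hevc b] at hpoly
      obtain ⟨Cp, hCp⟩ := IsCompact.exists_bound_of_continuousOn (isCompact_Icc (a := (0:ℝ)) (b := 1))
        (Polynomial.continuous p).continuousOn
      have hint_p : Integrable (fun x => Polynomial.eval ((Real.exp (-x) : ℝ) : ℂ) pc * h x) P := by
        refine Hint _ ((pc.continuous).comp
          (Complex.continuous_ofReal.comp
            (Real.continuous_exp.comp continuous_neg))).measurable Cp fun x hx => ?_
        rw [hevc, Complex.norm_real]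
        exact hCp _ ⟨(hu x hx).1.le, (hu x hx).2⟩
      have hint_f := hintf f hf
      have hdiff : ‖∫ x, (((f (Real.exp (-x)) : ℝ) : ℂ)
          - Polynomial.eval ((Real.exp (-x) : ℝ) : ℂ) pc) * h x ∂P‖ ≤ ε * Pt := by
        refine Hbnd _ ε fun x hx => ?_
        rw [hevc, ← Complex.ofReal_sub, Complex.norm_real, Real.norm_eq_abs]
        have h2 := hp _ ⟨(hu x hx).1.le, (hu x hx).2⟩
        rw [abs_sub_comm] at h2
        exact h2.le
      have hsplit : D = (∫ x, (((f (Real.exp (-x)) : ℝ) : ℂ)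
          - Polynomial.eval ((Real.exp (-x) : ℝ) : ℂ) pc) * h x ∂P)
          + c * (((Polynomial.eval b p : ℝ) : ℂ) - ((f b : ℝ) : ℂ)) := by
        have : ∫ x, (((f (Real.exp (-x)) : ℝ) : ℂ)
            - Polynomial.eval ((Real.exp (-x) : ℝ) : ℂ) pc) * h x ∂P
            = (∫ x, ((f (Real.exp (-x)) : ℝ) : ℂ) * h x ∂P)
              - ∫ x, Polynomial.eval ((Real.exp (-x) : ℝ) : ℂ) pc * h x ∂P := by
          rw [← integral_sub hint_f hint_p]
          refine integral_congr_ae (Filter.Eventually.of_forall fun x => ?_)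
          show _ = ((f (Real.exp (-x)) : ℝ) : ℂ) * h x
            - Polynomial.eval ((Real.exp (-x) : ℝ) : ℂ) pc * h x
          ring
        rw [hD, this, hpoly]
        ring
      have hb2 := hp b ⟨hb0, hb1⟩
      have hlast : ‖c * (((Polynomial.eval b p : ℝ) : ℂ) - ((f b : ℝ) : ℂ))‖ ≤ ‖c‖ * ε := by
        rw [norm_mul, ← Complex.ofReal_sub, Complex.norm_real, Real.norm_eq_abs]
        exact mul_le_mul_of_nonneg_left hb2.le (norm_nonneg c)
      calc ‖D‖ ≤ _ + _ := hsplit ▸ norm_add_le _ _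
        _ ≤ ε * Pt + ‖c‖ * ε := add_le_add hdiff hlast
        _ = ε * (Pt + ‖c‖) := by ring
    have hDz : D = 0 := by
      by_contra hD0
      have hDpos : 0 < ‖D‖ := norm_pos_iff.mpr hD0
      have hK : 0 < Pt + ‖c‖ := by linarith
      have hsm := hsmall (‖D‖ / (2 * (Pt + ‖c‖))) (by positivity)
      rw [div_mul_eq_mul_div, mul_comm] at hsm
      have h2 : (Pt + ‖c‖) * ‖D‖ / (2 * (Pt + ‖c‖)) = ‖D‖ / 2 := by
        rw [mul_comm 2 (Pt + ‖c‖)]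
        exact mul_div_mul_left _ _ (ne_of_gt hK)
      rw [h2] at hsm
      linarith
    rw [hD] at hDz
    exact sub_eq_zero.mp hDz
  -- h itself is integrable
  have hinth : Integrable h P :=
    bdd_integrable P h hmeas.aestronglyMeasurable 1
      (Filter.Eventually.of_forall fun x => (hnorm x).le)
  -- real and imaginary component identities
  have hre_id : ∀ f : ℝ → ℝ, Continuous f →
      ∫ x, f (Real.exp (-x)) * (h x).re ∂P = c.re * f b := by
    intro f hf
    calc ∫ x, f (Real.exp (-x)) * (h x).re ∂P
        = ∫ x, (((f (Real.exp (-x)) : ℝ) : ℂ) * h x).re ∂P := by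
          refine integral_congr_ae (Filter.Eventually.of_forall fun x => ?_)
          simp [Complex.mul_re]
      _ = (∫ x, ((f (Real.exp (-x)) : ℝ) : ℂ) * h x ∂P).re := integral_re (hintf f hf)
      _ = (c * ((f b : ℝ) : ℂ)).re := by rw [cont_id f hf]
      _ = c.re * f b := by simp [Complex.mul_re]
  have him_id : ∀ f : ℝ → ℝ, Continuous f →
      ∫ x, f (Real.exp (-x)) * (h x).im ∂P = c.im * f b := by
    intro f hf
    calc ∫ x, f (Real.exp (-x)) * (h x).im ∂P
        = ∫ x, (((f (Real.exp (-x)) : ℝ) : ℂ) * h x).im ∂P := by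
          refine integral_congr_ae (Filter.Eventually.of_forall fun x => ?_)
          simp [Complex.mul_im]
      _ = (∫ x, ((f (Real.exp (-x)) : ℝ) : ℂ) * h x ∂P).im := integral_im (hintf f hf)
      _ = (c * ((f b : ℝ) : ℂ)).im := by rw [cont_id f hf]
      _ = c.im * f b := by simp [Complex.mul_im]
  have hvrm : Measurable fun x => (h x).re := Complex.measurable_re.comp hmeas
  have hvim : Measurable fun x => (h x).im := Complex.measurable_im.comp hmeas
  have hvrb : ∀ x, |(h x).re| ≤ 1 := fun x => by
    calc |(h x).re| ≤ ‖h x‖ := Complex.abs_re_le_norm _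
      _ = 1 := hnorm x
  have hvib : ∀ x, |(h x).im| ≤ 1 := fun x => by
    calc |(h x).im| ≤ ‖h x‖ := Complex.abs_im_le_norm _
      _ = 1 := hnorm x
  have hSre := key_real P (fun x => (h x).re) hvrm hvrb c.re b hre_id
  have hSim := key_real P (fun x => (h x).im) hvim hvib c.im b him_id
  -- b cannot be 0
  have hbpos : 0 < b := by
    rcases lt_or_eq_of_le hb0 with hpos | hz
    · exact hpos
    · exfalso
      have hnot : b ∉ (fun x => Real.exp (-x)) '' Set.univ := by
        rintro ⟨x, -, hx⟩
        exact (Real.exp_pos (-x)).ne (by simpa using hx.trans hz.symm)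
      have h1 := hSre Set.univ MeasurableSet.univ
      have h2 := hSim Set.univ MeasurableSet.univ
      rw [if_neg hnot, Measure.restrict_univ] at h1 h2
      have e1 : ∫ x, (h x).re ∂P = (∫ x, h x ∂P).re := integral_re hinth
      have e2 : ∫ x, (h x).im ∂P = (∫ x, h x ∂P).im := integral_im hinth
      have hcre : c.re = 0 := by rw [hc, ← e1]; exact h1
      have hcim : c.im = 0 := by rw [hc, ← e2]; exact h2
      exact hmass (Complex.ext hcre hcim)
  -- the Dirac point
  refine ⟨c, -Real.log b, hmass, ?_, ?_⟩
  · rw [neg_nonneg]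
    exact Real.log_nonpos hb0 hb1
  · intro S hS
    have hTa : Real.exp (-(-Real.log b)) = b := by rw [neg_neg, Real.exp_log hbpos]
    have hmemiff : b ∈ (fun x => Real.exp (-x)) '' S ↔ -Real.log b ∈ S := by
      constructor
      · rintro ⟨x, hxS, hx⟩
        have hx' : Real.exp (-x) = b := hx
        have h3 : -x = -(-Real.log b) := Real.exp_injective (by rw [hx', hTa])
        have hxa : x = -Real.log b := by linarith [neg_injective h3]
        exact hxa ▸ hxS
      · intro haS
        exact ⟨-Real.log b, haS, hTa⟩
    have h1 := hSre S hS
    have h2 := hSim S hS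
    have hintS : Integrable h (P.restrict S) := hinth.restrict
    have e1 : ∫ x in S, (h x).re ∂P = (∫ x in S, h x ∂P).re := integral_re hintS
    have e2 : ∫ x in S, (h x).im ∂P = (∫ x in S, h x ∂P).im := integral_im hintS
    refine Complex.ext ?_ ?_
    · rw [← e1, h1]
      by_cases hmem : -Real.log b ∈ S
      · rw [if_pos ((hmemiff).mpr hmem), if_pos hmem]
      · rw [if_neg (fun hh => hmem ((hmemiff).mp hh)), if_neg hmem]
        simp
    · rw [← e2, h2]
      by_cases hmem : -Real.log b ∈ S
      · rw [if_pos ((hmemiff).mpr hmem), if_pos hmem]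
      · rw [if_neg (fun hh => hmem ((hmemiff).mp hh)), if_neg hmem]
        simp
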